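/- Let d ≥ 1, α′ ∈ (1,2) and η > 0. Then there exists a constant m₁ > 0, depending only on d, η and α′, such that for every x ∈ ℝ^d with |x| > 2, ∫_{{z : |x+z| ≤ |x|/4, |z| > 1}} ( |x+z|^η − |x|^η ) / |z|^{d+α′} dz ≤ −m₁ |x|^{η−α′}. -/

import Mathlib

open MeasureTheory

theorem stmt16 (d : ℕ) (hd : 1 ≤ d) (α' η : ℝ) (hα1 : 1 < α') (hα2 : α' < 2)
    (hη : 0 < η) :
    ∃ m₁ > (0:ℝ), ∀ x : EuclideanSpace ℝ (Fin d), 2 < ‖x‖ →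
      ∫ z in {z : EuclideanSpace ℝ (Fin d) | ‖x + z‖ ≤ ‖x‖ / 4 ∧ 1 < ‖z‖},
        (‖x + z‖ ^ η - ‖x‖ ^ η) / ‖z‖ ^ ((d : ℝ) + α')
      ≤ -m₁ * ‖x‖ ^ (η - α') := by
  set E := EuclideanSpace ℝ (Fin d)
  set V : ℝ := (volume (Metric.ball (0:E) 1)).toReal with hV
  have hVpos : 0 < V := by
    apply ENNReal.toReal_pos
    · exact (Metric.measure_ball_pos volume 0 one_pos).ne'
    · exact (measure_ball_lt_top).ne
  have hquarter : (0:ℝ) < 1 - (4:ℝ)⁻¹ ^ η := by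
    have : (4:ℝ)⁻¹ ^ η < 1 := Real.rpow_lt_one (by norm_num) (by norm_num) hη
    linarith
  have hda : (0:ℝ) < (d:ℝ) + α' := by positivity
  refine ⟨(1 - (4:ℝ)⁻¹ ^ η) * ((5/4:ℝ) ^ ((d:ℝ) + α'))⁻¹ * (4:ℝ)⁻¹ ^ (d:ℝ) * V, by positivity, ?_⟩
  intro x hx
  set r : ℝ := ‖x‖ with hrdef
  have hr0 : (0:ℝ) < r := by linarith
  have hr4 : (0:ℝ) ≤ r / 4 := by linarith
  -- the set is a closed ball
  have hset : {z : E | ‖x + z‖ ≤ r / 4 ∧ 1 < ‖z‖} = Metric.closedBall (-x) (r/4) := by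
    ext z
    simp only [Set.mem_setOf_eq, Metric.mem_closedBall, dist_eq_norm, sub_neg_eq_add]
    constructor
    · rintro ⟨h1, _⟩; rwa [dist_eq_norm, sub_neg_eq_add, add_comm]
    · intro h
      rw [dist_eq_norm, sub_neg_eq_add, add_comm] at h
      refine ⟨h, ?_⟩
      have : r - ‖x + z‖ ≤ ‖x - (x + z)‖ := norm_sub_norm_le _ _
      have hxz : ‖x - (x + z)‖ = ‖z‖ := by rw [show x - (x + z) = -z by abel, norm_neg]
      rw [hxz] at this
      linarith
  rw [hset]
  set A : Set E := Metric.closedBall (-x) (r/4) with hA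
  -- constants
  set C : ℝ := ((r/4) ^ η - r ^ η) / ((5*r/4) ^ ((d:ℝ) + α')) with hC
  have hb0 : (0:ℝ) < (5*r/4) ^ ((d:ℝ) + α') := Real.rpow_pos_of_pos (by linarith) _
  -- pointwise bound on A
  have hbound : ∀ z ∈ A, (‖x + z‖ ^ η - r ^ η) / ‖z‖ ^ ((d:ℝ) + α') ≤ C := by
    intro z hz
    have hz' : ‖x + z‖ ≤ r / 4 := by
      rw [hA, Metric.mem_closedBall, dist_eq_norm, sub_neg_eq_add, add_comm] at hz
      exact hz
    have hzlo : 3 * r / 4 ≤ ‖z‖ := by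
      have : r - ‖x + z‖ ≤ ‖x - (x + z)‖ := norm_sub_norm_le _ _
      have hxz : ‖x - (x + z)‖ = ‖z‖ := by rw [show x - (x + z) = -z by abel, norm_neg]
      rw [hxz] at this; linarith
    have hzhi : ‖z‖ ≤ 5 * r / 4 := by
      have : ‖z‖ = ‖(x + z) - x‖ := by rw [show (x + z) - x = z by abel]
      have h2 : ‖(x + z) - x‖ ≤ ‖x + z‖ + ‖x‖ := norm_sub_le _ _
      rw [← this] at h2
      linarith
    have hzpos : (0:ℝ) < ‖z‖ := by linarith
    have hbz : (0:ℝ) < ‖z‖ ^ ((d:ℝ) + α') := Real.rpow_pos_of_pos hzpos _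
    have hbub : ‖z‖ ^ ((d:ℝ) + α') ≤ (5*r/4) ^ ((d:ℝ) + α') :=
      Real.rpow_le_rpow hzpos.le hzhi hda.le
    have hnum : ‖x + z‖ ^ η - r ^ η ≤ (r/4) ^ η - r ^ η := by
      have := Real.rpow_le_rpow (norm_nonneg (x + z)) hz' hη.le
      linarith
    have hnum0 : (r/4) ^ η - r ^ η ≤ 0 := by
      have : (r/4) ^ η ≤ r ^ η := Real.rpow_le_rpow hr4 (by linarith) hη.le
      linarith
    rw [hC, div_le_div_iff₀ hbz hb0]
    calc (‖x + z‖ ^ η - r ^ η) * (5*r/4) ^ ((d:ℝ) + α')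
        ≤ ((r/4) ^ η - r ^ η) * (5*r/4) ^ ((d:ℝ) + α') :=
          mul_le_mul_of_nonneg_right hnum hb0.le
      _ ≤ ((r/4) ^ η - r ^ η) * ‖z‖ ^ ((d:ℝ) + α') :=
          mul_le_mul_of_nonpos_left hbub hnum0
  -- integrability
  have hcompact : IsCompact A := isCompact_closedBall _ _
  have hmeas : MeasurableSet A := measurableSet_closedBall
  have hcont : ContinuousOn (fun z : E => (‖x + z‖ ^ η - r ^ η) / ‖z‖ ^ ((d:ℝ) + α')) A := by
    apply ContinuousOn.div
    · apply Continuous.continuousOn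
      exact ((Real.continuous_rpow_const hη.le).comp
        ((continuous_const.add continuous_id).norm)).sub continuous_const
    · exact ((Real.continuous_rpow_const hda.le).comp continuous_norm).continuousOn
    · intro z hz
      have hz' : ‖x + z‖ ≤ r / 4 := by
        rw [hA, Metric.mem_closedBall, dist_eq_norm, sub_neg_eq_add, add_comm] at hz
        exact hz
      have hzlo : 3 * r / 4 ≤ ‖z‖ := by
        have h1 : r - ‖x + z‖ ≤ ‖x - (x + z)‖ := norm_sub_norm_le _ _
        have hxz : ‖x - (x + z)‖ = ‖z‖ := by rw [show x - (x + z) = -z by abel, norm_neg]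
        rw [hxz] at h1; linarith
      exact (Real.rpow_pos_of_pos (by linarith) _).ne'
  have hint : IntegrableOn (fun z : E => (‖x + z‖ ^ η - r ^ η) / ‖z‖ ^ ((d:ℝ) + α')) A :=
    hcont.integrableOn_compact hcompact
  have hintC : IntegrableOn (fun _ : E => C) A :=
    integrableOn_const hcompact.measure_lt_top.ne
  -- monotonicity
  have hmono : ∫ z in A, (‖x + z‖ ^ η - r ^ η) / ‖z‖ ^ ((d:ℝ) + α')
      ≤ ∫ _ in A, C := setIntegral_mono_on hint hintC hmeas hbound
  have hvol : (volume A).toReal = (r/4) ^ (d:ℕ) * V := by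
    rw [hA, Measure.addHaar_closedBall volume (-x) hr4, ENNReal.toReal_mul,
      ENNReal.toReal_ofReal (by positivity), finrank_euclideanSpace_fin]
  have hconst : ∫ _ in A, C = ((r/4) ^ (d:ℕ) * V) * C := by
    rw [setIntegral_const, measureReal_def, hvol, smul_eq_mul]
  -- final algebra
  have h14 : (r/4) ^ η = (4:ℝ)⁻¹ ^ η * r ^ η := by
    rw [show r/4 = 4⁻¹ * r by ring, Real.mul_rpow (by norm_num) hr0.le]
  have h54 : (5*r/4) ^ ((d:ℝ) + α') = (5/4:ℝ) ^ ((d:ℝ) + α') * r ^ ((d:ℝ) + α') := by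
    rw [show 5*r/4 = (5/4) * r by ring, Real.mul_rpow (by norm_num) hr0.le]
  have hrd : ((r/4) ^ (d:ℕ) : ℝ) = (4:ℝ)⁻¹ ^ (d:ℝ) * r ^ (d:ℝ) := by
    rw [← Real.rpow_natCast (r/4) d, show r/4 = 4⁻¹ * r by ring,
      Real.mul_rpow (by norm_num) hr0.le]
  have hpow : r ^ η * (r ^ ((d:ℝ) + α'))⁻¹ * r ^ (d:ℝ) = r ^ (η - α') := by
    rw [← Real.rpow_neg hr0.le, ← Real.rpow_add hr0, ← Real.rpow_add hr0]
    congr 1; ring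
  have hfinal : ((r/4) ^ (d:ℕ) * V) * C
      = -((1 - (4:ℝ)⁻¹ ^ η) * ((5/4:ℝ) ^ ((d:ℝ) + α'))⁻¹ * (4:ℝ)⁻¹ ^ (d:ℝ) * V) * r ^ (η - α') := by
    rw [hC, h14, h54, hrd, ← hpow]
    have h1 : r ^ ((d:ℝ) + α') ≠ 0 := (Real.rpow_pos_of_pos hr0 _).ne'
    have h2 : (5/4:ℝ) ^ ((d:ℝ) + α') ≠ 0 := (Real.rpow_pos_of_pos (by norm_num) _).ne'
    field_simp
    ring
  calc ∫ z in A, (‖x + z‖ ^ η - r ^ η) / ‖z‖ ^ ((d:ℝ) + α')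
      ≤ ∫ _ in A, C := hmono
    _ = ((r/4) ^ (d:ℕ) * V) * C := hconst
    _ = _ := hfinal
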